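/- Fix a > 1, Q > 0, and s > 0. For N ∈ ℕ and ξ ∈ [−1,1] define θ_N(ξ) = N^{1/2}·ξ·s − N·s + t_N · ((N − N^{1/2}ξ)² + Q²/4)^{a/2}, where t_N = s/(a·N^{a−1}). Then θ_N(ξ) = ((a−1)/2)·s·ξ² + c_N + E_N(ξ), where c_N does not depend on ξ and |E_N(ξ)| ≤ C·N^{−1/2} for all ξ ∈ [−1,1] and all sufficiently large N, with C depending only on a, Q, s. -/

import Mathlib

open Real Set

lemma rpow_bound' {u q : ℝ} (h1 : 1/2 ≤ u) (h2 : u ≤ 3/2) :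
    u ^ q ≤ (1/2:ℝ) ^ q + (3/2:ℝ) ^ q := by
  rcases le_or_gt 0 q with hq | hq
  · have h3 := Real.rpow_le_rpow (by linarith : (0:ℝ) ≤ u) h2 hq
    have h4 : (0:ℝ) < (1/2:ℝ) ^ q := Real.rpow_pos_of_pos (by norm_num) q
    linarith
  · have h3 := Real.rpow_le_rpow_of_nonpos (by norm_num : (0:ℝ) < 1/2) h1 hq.le
    have h4 : (0:ℝ) < (3/2:ℝ) ^ q := Real.rpow_pos_of_pos (by norm_num) q
    linarith

lemma abs_le_of_mem_uIcc' {t x : ℝ} (ht : t ∈ Set.uIcc 0 x) : |t| ≤ |x| := by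
  have h1 := le_abs_self x
  have h2 := neg_abs_le x
  rcases Set.mem_uIcc.mp ht with ⟨ha, hb⟩ | ⟨ha, hb⟩ <;>
    (rw [abs_le]; constructor <;> linarith)

lemma mvt_abs' (f f' : ℝ → ℝ) (x B : ℝ)
    (hd : ∀ t ∈ Set.uIcc 0 x, HasDerivAt f (f' t) t)
    (hb : ∀ t ∈ Set.uIcc 0 x, |f' t| ≤ B) : |f x - f 0| ≤ B * |x| := by
  have h := Convex.norm_image_sub_le_of_norm_hasDerivWithin_le
    (f := f) (f' := f') (s := Set.uIcc 0 x) (C := B)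
    (fun t ht => (hd t ht).hasDerivWithinAt) hb (convex_uIcc 0 x)
    Set.left_mem_uIcc Set.right_mem_uIcc
  simpa [Real.norm_eq_abs] using h

lemma hasDerivAt_one_add_rpow' (q t : ℝ) (h : -1 < t) :
    HasDerivAt (fun y : ℝ => (1+y) ^ q) (q * (1+t) ^ (q-1)) t := by
  have h1 : (1:ℝ) + t ≠ 0 := by linarith
  have h2 : HasDerivAt (fun y : ℝ => 1 + y) 1 t := (hasDerivAt_id t).const_add 1
  have := h2.rpow_const (p := q) (Or.inl h1)
  simpa [mul_comm] using this

lemma taylor2' (p : ℝ) : ∃ K > (0:ℝ), ∀ x : ℝ, |x| ≤ 1/2 →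
    |(1+x) ^ p - (1 + p*x + p*(p-1)/2 * x^2)| ≤ K * |x|^3 := by
  set M : ℝ := |p-2| * ((1/2:ℝ) ^ (p-3) + (3/2:ℝ) ^ (p-3)) with hM
  have hM0 : 0 ≤ M := by
    apply mul_nonneg (abs_nonneg _)
    have := Real.rpow_pos_of_pos (show (0:ℝ) < 1/2 by norm_num) (p-3)
    have := Real.rpow_pos_of_pos (show (0:ℝ) < 3/2 by norm_num) (p-3)
    linarith
  -- step 1
  have step1 : ∀ t : ℝ, |t| ≤ 1/2 → |(1+t) ^ (p-2) - 1| ≤ M * |t| := by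
    intro t ht
    have h := mvt_abs' (fun y => (1+y) ^ (p-2)) (fun y => (p-2) * (1+y) ^ (p-3)) t M
      (fun y hy => by
        have hm : (-1:ℝ) < y := by
          have := abs_le.mp ((abs_le_of_mem_uIcc' hy).trans ht); linarith
        have h := hasDerivAt_one_add_rpow' (p-2) y hm
        rw [show p-2-1 = p-3 by ring] at h
        exact h)
      (fun y hy => by
        have hy2 := abs_le.mp ((abs_le_of_mem_uIcc' hy).trans ht)
        have h5 : (0:ℝ) < 1 + y := by linarith
        rw [abs_mul, abs_of_pos (Real.rpow_pos_of_pos h5 (p-3))]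
        exact mul_le_mul_of_nonneg_left
          (rpow_bound' (by linarith) (by linarith)) (abs_nonneg _))
    simpa [Real.one_rpow] using h
  -- step 2
  have step2 : ∀ t : ℝ, |t| ≤ 1/2 →
      |p*(1+t) ^ (p-1) - (p + p*(p-1)*t)| ≤ (|p*(p-1)| * M) * |t|^2 := by
    intro t ht
    have h := mvt_abs' (fun y => p*(1+y) ^ (p-1) - (p + p*(p-1)*y))
      (fun y => p*(p-1)*((1+y) ^ (p-2) - 1)) t (|p*(p-1)| * M * |t|)
      (fun y hy => by
        have hy2 : (-1:ℝ) < y := by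
          have := abs_le.mp ((abs_le_of_mem_uIcc' hy).trans ht); linarith
        have hd1 := (hasDerivAt_one_add_rpow' (p-1) y hy2).const_mul p
        rw [show p-1-1 = p-2 by ring] at hd1
        have hd2 : HasDerivAt (fun y : ℝ => p + p*(p-1)*y) (p*(p-1)) y := by
          simpa using ((hasDerivAt_id y).const_mul (p*(p-1))).const_add p
        have := hd1.sub hd2
        exact this.congr_deriv (by ring))
      (fun y hy => by
        have hyt := abs_le_of_mem_uIcc' hy
        have hy1 : |y| ≤ 1/2 := hyt.trans ht
        have h1 := step1 y hy1
        calc |p*(p-1)*((1+y) ^ (p-2) - 1)| = |p*(p-1)| * |(1+y) ^ (p-2) - 1| := by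
              rw [abs_mul]
          _ ≤ |p*(p-1)| * (M * |y|) := mul_le_mul_of_nonneg_left h1 (abs_nonneg _)
          _ ≤ |p*(p-1)| * (M * |t|) :=
              mul_le_mul_of_nonneg_left (mul_le_mul_of_nonneg_left hyt hM0) (abs_nonneg _)
          _ = |p*(p-1)| * M * |t| := by ring)
    have h0 : (fun y : ℝ => p*(1+y) ^ (p-1) - (p + p*(p-1)*y)) 0 = 0 := by
      simp [Real.one_rpow]
    have h0' : (p * (1 + 0) ^ (p - 1) - (p + p * (p - 1) * 0)) = 0 := h0
    rw [h0', sub_zero] at h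
    calc |p*(1+t) ^ (p-1) - (p + p*(p-1)*t)| ≤ |p*(p-1)| * M * |t| * |t| := h
      _ = (|p*(p-1)| * M) * |t|^2 := by ring
  -- step 3
  refine ⟨|p*(p-1)| * M + 1, by positivity, fun x hx => ?_⟩
  have h := mvt_abs' (fun y => (1+y) ^ p - (1 + p*y + p*(p-1)/2*y^2))
    (fun y => p*(1+y) ^ (p-1) - (p + p*(p-1)*y)) x ((|p*(p-1)| * M) * |x|^2)
    (fun y hy => by
      have hy2 : (-1:ℝ) < y := by
        have := abs_le.mp ((abs_le_of_mem_uIcc' hy).trans hx); linarith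
      have hd1 := hasDerivAt_one_add_rpow' p y hy2
      have hd2 : HasDerivAt (fun y : ℝ => 1 + p*y + p*(p-1)/2*y^2) (p + p*(p-1)*y) y := by
        have := (((hasDerivAt_id y).const_mul p).const_add 1).add
          ((hasDerivAt_pow 2 y).const_mul (p*(p-1)/2))
        exact this.congr_deriv (by push_cast; ring)
      exact hd1.sub hd2)
    (fun y hy => by
      have hyt := abs_le_of_mem_uIcc' hy
      have hy1 : |y| ≤ 1/2 := hyt.trans hx
      calc |p*(1+y) ^ (p-1) - (p + p*(p-1)*y)| ≤ (|p*(p-1)| * M) * |y|^2 := step2 y hy1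
        _ ≤ (|p*(p-1)| * M) * |x|^2 := by
            apply mul_le_mul_of_nonneg_left _ (by positivity)
            exact pow_le_pow_left₀ (abs_nonneg _) hyt 2)
  have h0 : (fun y : ℝ => (1+y) ^ p - (1 + p*y + p*(p-1)/2*y^2)) 0 = 0 := by
    simp [Real.one_rpow]
  have h0' : ((1 + 0) ^ p - (1 + p * 0 + p * (p - 1) / 2 * 0 ^ 2)) = 0 := h0
  rw [h0', sub_zero] at h
  calc |(1+x) ^ p - (1 + p*x + p*(p-1)/2 * x^2)| ≤ |p*(p-1)| * M * |x|^2 * |x| := h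
    _ = (|p*(p-1)| * M) * |x|^3 := by ring
    _ ≤ (|p*(p-1)| * M + 1) * |x|^3 := by
        have : (0:ℝ) ≤ |x|^3 := by positivity
        nlinarith


set_option maxHeartbeats 1000000 in
lemma phase_aux (a Q s : ℝ) (ha : 1 < a) (hQ : 0 < Q) (hs : 0 < s)
    (K : ℝ) (hK : 0 < K)
    (hT : ∀ x : ℝ, |x| ≤ 1/2 →
      |(1+x) ^ (a/2) - (1 + (a/2)*x + (a/2)*((a/2)-1)/2 * x^2)| ≤ K * |x|^3)
    (m : ℝ) (hm8 : 8 ≤ m) (hmQ : 2*Q ≤ m^2) :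
    ∃ cN : ℝ, ∀ ξ ∈ Set.Icc (-1:ℝ) 1,
      |(m*ξ*s - m^2*s + (s/(a*(m^2:ℝ) ^ (a-1))) *
          (((m^2:ℝ) - m*ξ)^2 + Q^2/4) ^ (a/2))
        - (((a-1)/2)*s*ξ^2 + cN)|
      ≤ (|s*(a-2)/8| * ((1+Q^2/4)*(5+Q^2/4)) + (s/a)*K*(3+Q^2/4)^3) / m := by
  have hm0 : (0:ℝ) < m := by linarith
  have hm1 : (1:ℝ) ≤ m := by linarith
  have hm2 : (0:ℝ) < m^2 := by positivity
  have ha0 : a ≠ 0 := by linarith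
  have hsa : (0:ℝ) ≤ s/a := div_nonneg hs.le (by linarith)
  refine ⟨-(m^2)*s + (s/a)*m^2 + s*Q^2/(8*m^2), fun ξ hξ => ?_⟩
  obtain ⟨hξ1, hξ2⟩ := hξ
  have hξa : |ξ| ≤ 1 := abs_le.mpr ⟨hξ1, hξ2⟩
  have hξsq : ξ^2 ≤ 1 := by nlinarith [sq_abs ξ, abs_nonneg ξ]
  obtain ⟨x, hx⟩ : ∃ x : ℝ, x = -2*ξ/m + ξ^2/m^2 + Q^2/(4*m^4) := ⟨_, rfl⟩
  -- term bounds
  have e1 : |(-2*ξ/m)| ≤ 2/m := by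
    rw [abs_div, abs_of_pos hm0]
    gcongr
    calc |(-2*ξ)| = 2 * |ξ| := by rw [abs_mul]; norm_num
      _ ≤ 2 := by linarith
  have e2 : |ξ^2/m^2| ≤ 1/m := by
    rw [abs_div, abs_of_pos hm2, abs_of_nonneg (sq_nonneg ξ)]
    calc ξ^2/m^2 ≤ 1/m^2 := by gcongr
      _ ≤ 1/m := one_div_le_one_div_of_le hm0 (by nlinarith)
  have e3 : |Q^2/(4*m^4)| ≤ (Q^2/4)/m := by
    rw [abs_of_pos (by positivity)]
    rw [div_le_div_iff₀ (by positivity) hm0]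
    have hm4 : m ≤ m^4 := by
      calc m = m^1 := (pow_one m).symm
        _ ≤ m^4 := pow_le_pow_right₀ hm1 (by norm_num)
    nlinarith [mul_le_mul_of_nonneg_left hm4 (sq_nonneg Q)]
  have hxb : |x| ≤ (3+Q^2/4)/m := by
    rw [hx]
    calc |(-2*ξ/m + ξ^2/m^2 + Q^2/(4*m^4))| ≤ |(-2*ξ/m + ξ^2/m^2)| + |Q^2/(4*m^4)| := abs_add_le _ _
      _ ≤ (|(-2*ξ/m)| + |ξ^2/m^2|) + |Q^2/(4*m^4)| :=
          add_le_add_left (abs_add_le _ _) _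
      _ ≤ (2/m + 1/m) + (Q^2/4)/m := by
          exact add_le_add (add_le_add e1 e2) e3
      _ = (3+Q^2/4)/m := by ring
  have hm4Q : 4*Q^2 ≤ m^4 := by nlinarith
  have hx12 : |x| ≤ 1/2 := by
    have e1' : |(-2*ξ/m)| ≤ 1/4 := e1.trans (by
      rw [div_le_div_iff₀ hm0 (by norm_num : (0:ℝ) < 4)]; linarith)
    have e2' : |ξ^2/m^2| ≤ 1/8 := e2.trans (by
      rw [div_le_div_iff₀ hm0 (by norm_num : (0:ℝ) < 8)]; linarith)
    have e3' : |Q^2/(4*m^4)| ≤ 1/16 := by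
      rw [abs_of_pos (by positivity), div_le_div_iff₀ (by positivity)
        (by norm_num : (0:ℝ) < 16)]
      nlinarith
    rw [hx]
    calc |(-2*ξ/m + ξ^2/m^2 + Q^2/(4*m^4))| ≤ |(-2*ξ/m + ξ^2/m^2)| + |Q^2/(4*m^4)| :=
          abs_add_le _ _
      _ ≤ (|(-2*ξ/m)| + |ξ^2/m^2|) + |Q^2/(4*m^4)| :=
          add_le_add_left (abs_add_le _ _) _
      _ ≤ (1/4 + 1/8) + 1/16 := add_le_add (add_le_add e1' e2') e3'
      _ ≤ 1/2 := by norm_num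
  have hx1 : (0:ℝ) < 1 + x := by
    obtain ⟨l, r⟩ := abs_le.mp hx12; linarith
  -- base identity
  have hbase : ((m^2:ℝ) - m*ξ)^2 + Q^2/4 = m^4*(1+x) := by
    rw [hx]; field_simp; ring
  have hr1 : (((m^2:ℝ) - m*ξ)^2 + Q^2/4) ^ (a/2) = ((m:ℝ)^4) ^ (a/2) * (1+x) ^ (a/2) := by
    rw [hbase, Real.mul_rpow (by positivity) hx1.le]
  have h4 : ((m:ℝ)^4) ^ (a/2) = ((m:ℝ)^2) ^ a := by
    rw [show (m:ℝ)^4 = (m^2)^2 by ring, ← Real.rpow_natCast ((m:ℝ)^2) 2,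
      ← Real.rpow_mul hm2.le]
    norm_num
    congr 1
    push_cast
    ring
  have h5 : ((m:ℝ)^2) ^ a = ((m:ℝ)^2) ^ (a-1) * m^2 := by
    calc ((m:ℝ)^2) ^ a = ((m:ℝ)^2) ^ ((a-1)+1) := by ring_nf
      _ = ((m:ℝ)^2) ^ (a-1) * ((m:ℝ)^2) ^ (1:ℝ) := Real.rpow_add hm2 _ _
      _ = ((m:ℝ)^2) ^ (a-1) * m^2 := by rw [Real.rpow_one]
  have hrp : (0:ℝ) < ((m:ℝ)^2) ^ (a-1) := Real.rpow_pos_of_pos hm2 _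
  have hcoef : s/(a*((m:ℝ)^2) ^ (a-1)) * ((m:ℝ)^4) ^ (a/2) = (s/a) * m^2 := by
    rw [h4, h5]
    generalize ((m:ℝ)^2) ^ (a-1) = w at hrp ⊢
    field_simp
  -- key algebraic identity
  have hkey : (m*ξ*s - m^2*s + (s/(a*(m^2:ℝ) ^ (a-1))) *
        (((m^2:ℝ) - m*ξ)^2 + Q^2/4) ^ (a/2))
      - (((a-1)/2)*s*ξ^2 + (-(m^2)*s + (s/a)*m^2 + s*Q^2/(8*m^2)))
      = (s*(a-2)/8) * (m^2*x^2 - 4*ξ^2)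
        + (s/a)*m^2*((1+x) ^ (a/2) - (1 + (a/2)*x + (a/2)*((a/2)-1)/2 * x^2)) := by
    rw [hr1, ← mul_assoc, hcoef]
    generalize (1+x) ^ (a/2) = y
    rw [hx]
    field_simp
    ring
  -- bound E1
  have hsum : m*x + 2*ξ = ξ^2/m + Q^2/(4*m^3) := by
    rw [hx]; field_simp; ring
  have h6 : |m*x + 2*ξ| ≤ (1+Q^2/4)/m := by
    rw [hsum]
    have f1 : |ξ^2/m| ≤ 1/m := by
      rw [abs_of_nonneg (by positivity)]; gcongr
    have f2 : |Q^2/(4*m^3)| ≤ (Q^2/4)/m := by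
      rw [abs_of_pos (by positivity), div_le_div_iff₀ (by positivity) hm0]
      have hm3 : m ≤ m^3 := by
        calc m = m^1 := (pow_one m).symm
          _ ≤ m^3 := pow_le_pow_right₀ hm1 (by norm_num)
      nlinarith [mul_le_mul_of_nonneg_left hm3 (sq_nonneg Q)]
    calc |ξ^2/m + Q^2/(4*m^3)| ≤ |ξ^2/m| + |Q^2/(4*m^3)| := abs_add_le _ _
      _ ≤ 1/m + (Q^2/4)/m := add_le_add f1 f2
      _ = (1+Q^2/4)/m := by ring
  have h7 : |m*x - 2*ξ| ≤ 5+Q^2/4 := by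
    have hre : m*x - 2*ξ = (m*x + 2*ξ) - 4*ξ := by ring
    rw [hre]
    have f3 : |(4:ℝ)*ξ| ≤ 4 := by
      rw [abs_mul]; norm_num; linarith [hξa]
    have f4 : (1+Q^2/4)/m ≤ 1+Q^2/4 := div_le_self (by positivity) hm1
    calc |(m*x + 2*ξ) - 4*ξ| ≤ |m*x + 2*ξ| + |4*ξ| := abs_sub _ _
      _ ≤ (1+Q^2/4)/m + 4 := add_le_add h6 f3
      _ ≤ 5+Q^2/4 := by linarith
  have hE1 : |m^2*x^2 - 4*ξ^2| ≤ ((1+Q^2/4)*(5+Q^2/4))/m := by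
    have hfac : m^2*x^2 - 4*ξ^2 = (m*x - 2*ξ)*(m*x + 2*ξ) := by ring
    calc |m^2*x^2 - 4*ξ^2| = |m*x - 2*ξ| * |m*x + 2*ξ| := by rw [hfac, abs_mul]
      _ ≤ (5+Q^2/4) * ((1+Q^2/4)/m) :=
          mul_le_mul h7 h6 (abs_nonneg _) (by positivity)
      _ = ((1+Q^2/4)*(5+Q^2/4))/m := by ring
  -- bound R
  have hR : |(1+x) ^ (a/2) - (1 + (a/2)*x + (a/2)*((a/2)-1)/2 * x^2)|
      ≤ K * ((3+Q^2/4)/m)^3 := by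
    refine (hT x hx12).trans ?_
    exact mul_le_mul_of_nonneg_left (pow_le_pow_left₀ (abs_nonneg _) hxb 3) hK.le
  -- combine
  rw [hkey]
  calc |(s*(a-2)/8) * (m^2*x^2 - 4*ξ^2)
        + (s/a)*m^2*((1+x) ^ (a/2) - (1 + (a/2)*x + (a/2)*((a/2)-1)/2 * x^2))|
      ≤ |s*(a-2)/8| * |m^2*x^2 - 4*ξ^2|
        + (s/a)*m^2*|(1+x) ^ (a/2) - (1 + (a/2)*x + (a/2)*((a/2)-1)/2 * x^2)| := by
        refine (abs_add_le _ _).trans ?_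
        rw [abs_mul, abs_mul ((s/a)*m^2) _, abs_of_nonneg (mul_nonneg hsa hm2.le)]
    _ ≤ |s*(a-2)/8| * (((1+Q^2/4)*(5+Q^2/4))/m)
        + (s/a)*m^2*(K * ((3+Q^2/4)/m)^3) := by
        exact add_le_add (mul_le_mul_of_nonneg_left hE1 (abs_nonneg _))
          (mul_le_mul_of_nonneg_left hR (mul_nonneg hsa hm2.le))
    _ = (|s*(a-2)/8| * ((1+Q^2/4)*(5+Q^2/4)) + (s/a)*K*(3+Q^2/4)^3) / m := by
        have he : (s/a)*m^2*(K * ((3+Q^2/4)/m)^3) = ((s/a)*K*(3+Q^2/4)^3)/m := by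
          field_simp
        rw [he, ← mul_div_assoc, ← add_div]


theorem phase_quadratic_expansion (a Q s : ℝ) (ha : 1 < a) (hQ : 0 < Q) (hs : 0 < s) :
    ∃ C > (0 : ℝ), ∃ N₀ : ℕ, ∀ N : ℕ, N₀ ≤ N → ∃ cN : ℝ,
      ∀ ξ ∈ Set.Icc (-1 : ℝ) 1,
        |(Real.sqrt N * ξ * s - N * s +
            (s / (a * (N : ℝ) ^ (a - 1))) *
              (((N : ℝ) - Real.sqrt N * ξ) ^ 2 + Q ^ 2 / 4) ^ (a / 2))
          - (((a - 1) / 2) * s * ξ ^ 2 + cN)| ≤ C * (N : ℝ) ^ (-(1 / 2) : ℝ) := by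
  obtain ⟨K, hK, hT⟩ := taylor2' (a/2)
  have hT' : ∀ x : ℝ, |x| ≤ 1/2 →
      |(1+x) ^ (a/2) - (1 + (a/2)*x + (a/2)*((a/2)-1)/2 * x^2)| ≤ K * |x|^3 := hT
  set C0 : ℝ := |s*(a-2)/8| * ((1+Q^2/4)*(5+Q^2/4)) + (s/a)*K*(3+Q^2/4)^3 with hC0
  have hsa : (0:ℝ) ≤ s/a := div_nonneg hs.le (by linarith)
  have hC0n : 0 ≤ C0 := by
    refine add_nonneg (mul_nonneg (abs_nonneg _) (by positivity)) ?_
    exact mul_nonneg (mul_nonneg hsa hK.le) (by positivity)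
  refine ⟨C0 + 1, by linarith, 64 + 2*⌈Q⌉₊, fun N hN => ?_⟩
  set m : ℝ := Real.sqrt (N:ℝ) with hm
  have hN64 : (64:ℝ) ≤ (N:ℝ) := by
    have : (64:ℕ) ≤ N := by omega
    exact_mod_cast this
  have hNQ : 2*Q ≤ (N:ℝ) := by
    have h1 : Q ≤ (⌈Q⌉₊ : ℝ) := Nat.le_ceil Q
    have h2 : 2*⌈Q⌉₊ ≤ N := by omega
    have h3 : ((2*⌈Q⌉₊ : ℕ) : ℝ) ≤ (N : ℝ) := by exact_mod_cast h2
    push_cast at h3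
    linarith
  have hm8 : (8:ℝ) ≤ m := by
    rw [hm, show (8:ℝ) = Real.sqrt 64 by
      rw [show (64:ℝ) = 8^2 by norm_num, Real.sqrt_sq (by norm_num)]]
    exact Real.sqrt_le_sqrt hN64
  have hm0 : (0:ℝ) < m := by linarith
  have hNm : (N:ℝ) = m^2 := (Real.sq_sqrt (by positivity)).symm
  have hmQ2 : 2*Q ≤ m^2 := hNm ▸ hNQ
  obtain ⟨cN, hcN⟩ := phase_aux a Q s ha hQ hs K hK hT' m hm8 hmQ2
  refine ⟨cN, fun ξ hξ => ?_⟩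
  have h := hcN ξ hξ
  rw [hNm]
  have hrw : ((m:ℝ)^2) ^ (-(1/2) : ℝ) = 1/m := by
    rw [Real.rpow_neg (by positivity), ← Real.rpow_natCast m 2, ← Real.rpow_mul hm0.le]
    norm_num
  rw [hrw]
  calc |(m * ξ * s - m^2 * s +
        (s / (a * (m^2:ℝ) ^ (a - 1))) *
          (((m^2:ℝ) - m * ξ) ^ 2 + Q ^ 2 / 4) ^ (a / 2))
      - (((a - 1) / 2) * s * ξ ^ 2 + cN)| ≤ C0 / m := h
    _ ≤ (C0 + 1) * (1/m) := by
        rw [mul_one_div]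
        gcongr
        linarith
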